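/- arXiv:0802.2705 — 2 statements merged into one kernel-verified Lean document; each statement's English description precedes it below -/
import Mathlib

section
/- Let μ be a computable Borel probability measure on Cantor space, i.e. there is a computable g : Strings × ℕ → ℚ with |g(σ,n) − μ([σ])| ≤ 2^{-n} for all σ, n. If μ({x}) > 0 for some x ∈ 2^ω, then x is computable. -/
open MeasureTheory

abbrev Cantor : Type := ℕ → Bool

def cyl (σ : List Bool) : Set Cantor := {x | ∀ i, i < σ.length → x i = σ.getD i false}

/-- encoding of ℚ unfolds to a pair of the (int-encoded) numerator and denominator -/
lemma enc_rat (r : ℚ) : Encodable.encode r = Nat.pair (Encodable.encode r.num) r.den := rfl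

lemma enc_int (n : ℤ) : Encodable.encode n = if 0 ≤ n then 2 * n.toNat else 2 * n.natAbs - 1 := by
  cases n with
  | ofNat m => rfl
  | negSucc m => rfl


namespace QltAux

open Encodable

/-- the "old" (structural) encoding of ℚ -/
def eQ (r : ℚ) : ℕ := @Encodable.encode ℚ Rat.instEncodable r

def S : Set ℕ := Set.range (@Encodable.encode ℚ Rat.instEncodable)

instance : DecidablePred (· ∈ S) := Encodable.decidableRangeEncode ℚ

def cnt : ℕ → ℕ := fun m =>
  Nat.rec (motive := fun _ => ℕ) 0 (fun y ih => ih + (bif decide (y ∈ S) then 1 else 0)) m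

lemma cnt_succ (m : ℕ) : cnt (m + 1) = cnt m + (bif decide (m ∈ S) then 1 else 0) := rfl

lemma cnt_eq_countP (m : ℕ) : cnt m = (List.range m).countP (fun y => decide (y ∈ S)) := by
  induction m with
  | zero => rfl
  | succ m ih =>
    rw [cnt_succ, ih, List.range_succ, List.countP_append]
    cases h : decide (m ∈ S) <;> simp [List.countP, List.countP.go, h]

/-- the encoding used by the `Primcodable` instance -/
abbrev nE (r : ℚ) : ℕ := @Encodable.encode ℚ Primcodable.toEncodable r

/-- the `Primcodable` encoding of ℚ is the rank of the structural encoding -/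
lemma encode_eq_cnt (r : ℚ) : nE r = cnt (eQ r) := by
  rw [cnt_eq_countP]
  rfl

lemma eQ_mem_S (r : ℚ) : eQ r ∈ S := ⟨r, rfl⟩

lemma enc_rat' (r : ℚ) : eQ r = Nat.pair (@Encodable.encode ℤ _ r.num) r.den := rfl

lemma enc_int' (n : ℤ) :
    @Encodable.encode ℤ _ n = if 0 ≤ n then 2 * n.toNat else 2 * n.natAbs - 1 := by
  cases n with
  | ofNat m => rfl
  | negSucc m => rfl

lemma enc_int_half (n : ℤ) : (@Encodable.encode ℤ _ n + 1) / 2 = n.natAbs := by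
  rw [enc_int']
  rcases le_or_gt 0 n with h | h
  · rw [if_pos h]; omega
  · rw [if_neg (not_le.mpr h)]; omega

def gstep : ℕ × ℕ → ℕ × ℕ := fun p => if p.2 = 0 then p else (p.2, p.1 % p.2)

lemma gstep_iter_gcd : ∀ (n : ℕ) (p : ℕ × ℕ), p.2 ≤ n → (gstep^[n + 1] p).1 = Nat.gcd p.1 p.2 := by
  intro n
  induction n with
  | zero =>
    intro p hp
    have hp0 : p.2 = 0 := Nat.le_zero.mp hp
    rw [Function.iterate_one, gstep, if_pos hp0, hp0, Nat.gcd_zero_right]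
  | succ n ih =>
    intro p hp
    rcases Nat.eq_zero_or_pos p.2 with hp0 | hp0
    · have hfix : gstep p = p := by rw [gstep, if_pos hp0]
      rw [Function.iterate_succ_apply, hfix]
      exact ih p (hp0 ▸ Nat.zero_le n)
    · rw [Function.iterate_succ_apply, gstep, if_neg (Nat.pos_iff_ne_zero.mp hp0)]
      have hlt : p.1 % p.2 ≤ n := by
        have := Nat.mod_lt p.1 hp0
        omega
      rw [ih (p.2, p.1 % p.2) hlt]
      show Nat.gcd p.2 (p.1 % p.2) = Nat.gcd p.1 p.2
      rw [Nat.gcd_comm p.1 p.2, Nat.gcd_rec p.2 p.1]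
      rw [Nat.gcd_comm]

lemma primrec_gcd : Primrec₂ Nat.gcd := by
  have hgstep : Primrec gstep := by
    refine Primrec.ite (Primrec.eq.comp Primrec.snd (Primrec.const 0)) Primrec.id ?_
    exact Primrec.pair Primrec.snd (Primrec.nat_mod.comp Primrec.fst Primrec.snd)
  have hiter : Primrec₂ fun (p : ℕ × ℕ) (n : ℕ) => gstep^[n] p := by
    have := Primrec.nat_rec' (f := fun q : (ℕ × ℕ) × ℕ => q.2)
      (g := fun q : (ℕ × ℕ) × ℕ => q.1)
      (h := fun _ pr => gstep pr.2)
      Primrec.snd Primrec.fst ((hgstep.comp (Primrec.snd.comp Primrec.snd)).to₂)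
    refine this.to₂.of_eq fun p n => ?_
    induction n with
    | zero => rfl
    | succ n ihn =>
      show gstep (Nat.rec _ _ n) = _
      rw [ihn]
      exact (Function.iterate_succ_apply' gstep n p).symm
  have hmain : Primrec₂ fun a b : ℕ => (gstep^[b + 1] (a, b)).1 :=
    (Primrec.fst.comp
      (hiter.comp (Primrec.pair Primrec.fst Primrec.snd)
        (Primrec.succ.comp Primrec.snd))).to₂
  exact hmain.of_eq fun a b => gstep_iter_gcd b (a, b) (le_refl b)

lemma mem_S_iff' (m : ℕ) :
    m ∈ S ↔ 0 < (Nat.unpair m).2 ∧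
      Nat.gcd (((Nat.unpair m).1 + 1) / 2) (Nat.unpair m).2 = 1 := by
  constructor
  · rintro ⟨r, rfl⟩
    have : Encodable.encode r = eQ r := rfl
    rw [this, enc_rat', Nat.unpair_pair]
    refine ⟨r.pos, ?_⟩
    rw [enc_int_half]
    exact r.reduced
  · rintro ⟨hd, hg⟩
    set a := (Nat.unpair m).1 with ha
    set d := (Nat.unpair m).2 with hd2
    set nn : ℤ := if a % 2 = 0 then ((a / 2 : ℕ) : ℤ) else -(((a + 1) / 2 : ℕ) : ℤ) with hnn
    have habs : nn.natAbs = (a + 1) / 2 := by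
      by_cases hpar : a % 2 = 0
      · rw [hnn, if_pos hpar, Int.natAbs_natCast]; omega
      · rw [hnn, if_neg hpar, Int.natAbs_neg, Int.natAbs_natCast]
    have henc : @Encodable.encode ℤ _ nn = a := by
      rw [enc_int']
      by_cases hpar : a % 2 = 0
      · rw [hnn, if_pos hpar, if_pos (by positivity), Int.toNat_natCast]; omega
      · rw [hnn, if_neg hpar, if_neg (by omega), Int.natAbs_neg, Int.natAbs_natCast]; omega
    refine ⟨⟨nn, d, by omega, by rw [Nat.Coprime, habs]; exact hg⟩, ?_⟩
    show Nat.pair (@Encodable.encode ℤ _ nn) d = m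
    rw [henc, ha, hd2, Nat.pair_unpair]

lemma cnt_mono : Monotone cnt :=
  monotone_nat_of_le_succ fun m => by rw [cnt_succ]; cases decide (m ∈ S) <;> simp

lemma cnt_inj {m m' : ℕ} (hm : m ∈ S) (hm' : m' ∈ S) (h : cnt m = cnt m') : m = m' := by
  rcases lt_trichotomy m m' with hlt | heq | hlt
  · exfalso
    have h1 : cnt (m + 1) = cnt m + 1 := by rw [cnt_succ, decide_eq_true hm]; rfl
    have h2 := cnt_mono (show m + 1 ≤ m' from hlt)
    omega
  · exact heq
  · exfalso
    have h1 : cnt (m' + 1) = cnt m' + 1 := by rw [cnt_succ, decide_eq_true hm']; rfl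
    have h2 := cnt_mono (show m' + 1 ≤ m from hlt)
    omega

lemma primrec_decide_S : Primrec fun m : ℕ => decide (m ∈ S) := by
  have h1 : PrimrecPred fun m : ℕ => 0 < (Nat.unpair m).2 :=
    Primrec.nat_lt.comp (Primrec.const 0) (Primrec.snd.comp Primrec.unpair)
  have h2 : PrimrecPred fun m : ℕ =>
      Nat.gcd (((Nat.unpair m).1 + 1) / 2) (Nat.unpair m).2 = 1 := by
    have hgcd : Primrec₂ Nat.gcd := primrec_gcd
    exact Primrec.eq.comp
      (hgcd.comp
        (Primrec.nat_div.comp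
          ((Primrec.succ).comp (Primrec.fst.comp Primrec.unpair)) (Primrec.const 2))
        (Primrec.snd.comp Primrec.unpair))
      (Primrec.const 1)
  exact ((h1.and h2).of_eq fun m => (mem_S_iff' m).symm).decide

lemma primrec_cnt : Primrec cnt :=
  Primrec.nat_rec₁ 0
    ((Primrec.nat_add.comp Primrec.snd
      (Primrec.cond (primrec_decide_S.comp Primrec.fst) (Primrec.const 1)
        (Primrec.const 0))).to₂)

lemma computable_eQ : Computable eQ := by
  have hinner : Primrec fun p : ℚ × ℕ =>
      decide (p.2 ∈ S ∧ cnt p.2 = nE p.1) := by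
    have hA : PrimrecPred fun p : ℚ × ℕ => p.2 ∈ S := (primrec_decide_S.comp Primrec.snd).primrecPred
    have hB : PrimrecPred fun p : ℚ × ℕ => cnt p.2 = nE p.1 :=
      Primrec.eq.comp (primrec_cnt.comp Primrec.snd) (Primrec.encode.comp Primrec.fst)
    exact (hA.and hB).decide
  have hrf : Partrec fun r : ℚ => Nat.rfind fun m =>
      Part.some (decide (m ∈ S ∧ cnt m = nE r)) :=
    Partrec.rfind ((hinner.to_comp.to₂).partrec₂)
  have heq : ∀ r : ℚ, (Nat.rfind fun m =>
      Part.some (decide (m ∈ S ∧ cnt m = nE r))) = Part.some (eQ r) := by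
    intro r
    rw [Part.eq_some_iff]; refine Nat.mem_rfind.mpr ?_
    constructor
    · rw [Part.mem_some_iff, eq_comm, decide_eq_true_iff]
      exact ⟨eQ_mem_S r, (encode_eq_cnt r).symm⟩
    · intro m hm
      rw [Part.mem_some_iff, eq_comm, decide_eq_false_iff_not]
      rintro ⟨hmS, hmc⟩
      rw [encode_eq_cnt] at hmc
      exact absurd (cnt_inj hmS (eQ_mem_S r) hmc) (Nat.ne_of_lt hm)
  exact (hrf.of_eq heq)

/-- comparison with a fixed positive rational is computable -/
lemma computable_qlt (q : ℚ) (hq : 0 < q) : Computable fun r : ℚ => decide (q < r) := by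
  have hF : Primrec fun m : ℕ =>
      decide ((Nat.unpair m).1 % 2 = 0 ∧
        q.num.toNat * (Nat.unpair m).2 < (Nat.unpair m).1 / 2 * q.den) := by
    have h1 : PrimrecPred fun m : ℕ => (Nat.unpair m).1 % 2 = 0 :=
      Primrec.eq.comp
        (Primrec.nat_mod.comp (Primrec.fst.comp Primrec.unpair) (Primrec.const 2))
        (Primrec.const 0)
    have h2 : PrimrecPred fun m : ℕ =>
        q.num.toNat * (Nat.unpair m).2 < (Nat.unpair m).1 / 2 * q.den :=
      Primrec.nat_lt.comp
        (Primrec.nat_mul.comp (Primrec.const q.num.toNat)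
          (Primrec.snd.comp Primrec.unpair))
        (Primrec.nat_mul.comp
          (Primrec.nat_div.comp (Primrec.fst.comp Primrec.unpair) (Primrec.const 2))
          (Primrec.const q.den))
    exact (h1.and h2).decide
  refine (hF.to_comp.comp computable_eQ).of_eq fun r => ?_
  rw [enc_rat', Nat.unpair_pair]
  rcases le_or_gt 0 r.num with hn | hn
  · rw [enc_int', if_pos hn]
    simp only [Nat.mul_mod_right, Nat.mul_div_cancel_left _ (by norm_num : 0 < 2)]
    have hq' : 0 ≤ q.num := le_of_lt (Rat.num_pos.mpr hq)
    have k1 : ((q.num.toNat * r.den : ℕ) : ℤ) = q.num * r.den := by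
      push_cast
      rw [Int.toNat_of_nonneg hq']
    have k2 : ((r.num.toNat * q.den : ℕ) : ℤ) = r.num * q.den := by
      push_cast
      rw [Int.toNat_of_nonneg hn]
    have : (q < r) ↔ q.num.toNat * r.den < r.num.toNat * q.den := by
      rw [Rat.lt_iff, ← k1, ← k2, Int.ofNat_lt]
    simp [this]
  · rw [enc_int', if_neg (not_le.mpr hn)]
    have hr0 : r < 0 := Rat.num_neg.mp hn
    have : ¬ (q < r) := not_lt.mpr (le_of_lt (lt_trans hr0 hq))
    have habs : 1 ≤ r.num.natAbs := by omega
    have hodd : (2 * r.num.natAbs - 1) % 2 = 1 := by omega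
    simp [this, hodd]

end QltAux

theorem stmt_4 (μ : Measure Cantor) [IsProbabilityMeasure μ]
    (g : List Bool × ℕ → ℚ) (hg : Computable g)
    (happrox : ∀ σ n, |(g (σ, n) : ℝ) - (μ (cyl σ)).toReal| ≤ (2:ℝ)⁻¹ ^ n)
    (x : Cantor) (hatom : 0 < μ {x}) :
    Computable x := by
  classical
  -- cylinders are measurable
  have hcyl : ∀ σ, MeasurableSet (cyl σ) := by
    intro σ
    have : cyl σ = ⋂ i ∈ Set.Iio σ.length, (fun y : Cantor => y i) ⁻¹' {σ.getD i false} := by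
      ext y; simp [cyl]
    rw [this]
    exact MeasurableSet.biInter (Set.to_countable _) fun i _ =>
      (measurable_pi_apply i) (measurableSet_singleton _)
  set pre : ℕ → List Bool := fun k => (List.range k).map x with hpre
  have hlen : ∀ k, (pre k).length = k := by intro k; simp [hpre]
  have hpreD : ∀ k i, i < k → (pre k).getD i false = x i := by
    intro k i hi
    rw [List.getD_eq_getElem _ _ (by simp [hpre]; exact hi)]
    simp [hpre]
  have hmem : ∀ y k, y ∈ cyl (pre k) ↔ ∀ i, i < k → y i = x i := by
    intro y k
    constructor
    · intro h i hi
      have := h i (by rw [hlen]; exact hi)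
      rwa [hpreD k i hi] at this
    · intro h i hi
      rw [hlen] at hi
      rw [hpreD k i hi]; exact h i hi
  have hxmem : ∀ k, x ∈ cyl (pre k) := fun k => (hmem x k).mpr (fun _ _ => rfl)
  have hmono : ∀ {i j : ℕ}, i ≤ j → cyl (pre j) ⊆ cyl (pre i) := by
    intro i j hij y hy
    exact (hmem y i).mpr fun i' hi' => (hmem y j).mp hy i' (lt_of_lt_of_le hi' hij)
  -- concatenation membership
  have happmem : ∀ (σ : List Bool) (b : Bool) (y : Cantor),
      y ∈ cyl (σ ++ [b]) ↔ y ∈ cyl σ ∧ y σ.length = b := by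
    intro σ b y
    simp only [cyl, Set.mem_setOf_eq, List.length_append, List.length_cons, List.length_nil]
    constructor
    · intro h
      refine ⟨fun i hi => ?_, ?_⟩
      · have := h i (by omega)
        rwa [List.getD_append _ _ _ _ hi] at this
      · have := h σ.length (by omega)
        simpa using this
    · rintro ⟨h1, h2⟩ i hi
      rcases lt_or_eq_of_le (Nat.lt_succ_iff.mp (by omega : i < σ.length + 1)) with hi' | hi'
      · rw [List.getD_append _ _ _ _ hi']; exact h1 i hi'
      · subst hi'
        simpa using h2
  -- splitting
  have hsplit : ∀ σ : List Bool, (μ (cyl σ)).toReal =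
      (μ (cyl (σ ++ [true]))).toReal + (μ (cyl (σ ++ [false]))).toReal := by
    intro σ
    have hu : cyl (σ ++ [true]) ∪ cyl (σ ++ [false]) = cyl σ := by
      ext y
      simp only [Set.mem_union, happmem]
      cases hyb : y σ.length <;> simp [hyb]
    have hd : Disjoint (cyl (σ ++ [true])) (cyl (σ ++ [false])) := by
      rw [Set.disjoint_left]
      intro y hy1 hy2
      have h1 := ((happmem σ true y).mp hy1).2
      have h2 := ((happmem σ false y).mp hy2).2
      exact absurd (h1.symm.trans h2) (by decide)
    rw [← hu, measure_union hd (hcyl _), ENNReal.toReal_add (measure_ne_top μ _) (measure_ne_top μ _)]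
  set A : ℝ := (μ {x}).toReal with hA
  have hA0 : 0 < A := ENNReal.toReal_pos hatom.ne' (measure_ne_top μ _)
  have hAle : ∀ j, A ≤ (μ (cyl (pre j))).toReal := by
    intro j
    exact ENNReal.toReal_mono (measure_ne_top μ _)
      (measure_mono (Set.singleton_subset_iff.mpr (hxmem j)))
  -- continuity from above
  have hiInter : ⋂ k, cyl (pre k) = {x} := by
    ext y
    simp only [Set.mem_iInter, Set.mem_singleton_iff]
    constructor
    · intro h
      funext i
      exact (hmem y (i + 1)).mp (h (i + 1)) i (Nat.lt_succ_self i)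
    · rintro rfl k; exact hxmem k
  have hT : Filter.Tendsto (fun k => (μ (cyl (pre k))).toReal) Filter.atTop (nhds A) := by
    have h1 : Filter.Tendsto (fun k => μ (cyl (pre k))) Filter.atTop (nhds (μ {x})) := by
      have := tendsto_measure_iInter_atTop (μ := μ)
        (fun k => (hcyl (pre k)).nullMeasurableSet)
        (fun i j hij => hmono hij) ⟨0, measure_ne_top μ _⟩
      rwa [hiInter] at this
    exact (ENNReal.tendsto_toReal (measure_ne_top μ _)).comp h1
  obtain ⟨m, hm⟩ : ∃ m, (μ (cyl (pre m))).toReal < A + A / 4 := by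
    have := (hT.eventually_lt_const (by linarith : A < A + A / 4)).exists
    exact this
  set M : ℝ := (μ (cyl (pre m))).toReal with hMdef
  -- choose precision n
  obtain ⟨n, hn⟩ : ∃ n : ℕ, (2:ℝ)⁻¹ ^ n < A / 8 :=
    exists_pow_lt_of_lt_one (by linarith) (by norm_num)
  have h2n : (0:ℝ) < (2:ℝ)⁻¹ ^ n := by positivity
  -- choose rational threshold
  obtain ⟨q, hq1, hq2⟩ : ∃ q : ℚ, (M - A) + (2:ℝ)⁻¹ ^ n < q ∧ (q:ℝ) < A - (2:ℝ)⁻¹ ^ n := by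
    apply exists_rat_btwn
    have := hAle m
    linarith [hm]
  have hq0 : 0 < q := by
    have hMA : 0 ≤ M - A := by have := hAle m; linarith
    have : (0:ℝ) < q := by linarith
    exact_mod_cast this
  -- key: decision is correct
  have hkey : ∀ j, m ≤ j → decide (q < g (pre j ++ [true], n)) = x j := by
    intro j hj
    have hstep : pre (j+1) = pre j ++ [x j] := by
      simp [hpre, List.range_succ]
    have hjle : (μ (cyl (pre j))).toReal ≤ M := by
      exact ENNReal.toReal_mono (measure_ne_top μ _) (measure_mono (hmono hj))
    cases hxj : x j with
    | true =>
      have hc : cyl (pre j ++ [true]) = cyl (pre (j+1)) := by rw [hstep, hxj]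
      have hge : A ≤ (μ (cyl (pre j ++ [true]))).toReal := by rw [hc]; exact hAle (j+1)
      have habs := happrox (pre j ++ [true]) n
      have : (q:ℝ) < g (pre j ++ [true], n) := by
        have h1 := (abs_le.mp habs).1
        linarith
      simp [show q < g (pre j ++ [true], n) from by exact_mod_cast this]
    | false =>
      have hc : cyl (pre j ++ [false]) = cyl (pre (j+1)) := by rw [hstep, hxj]
      have hge : A ≤ (μ (cyl (pre j ++ [false]))).toReal := by rw [hc]; exact hAle (j+1)
      have hsp := hsplit (pre j)
      have hwrong : (μ (cyl (pre j ++ [true]))).toReal ≤ M - A := by linarith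
      have habs := happrox (pre j ++ [true]) n
      have : (g (pre j ++ [true], n) : ℝ) < q := by
        have h1 := (abs_le.mp habs).2
        linarith
      have : ¬ (q < g (pre j ++ [true], n)) := by
        apply not_lt.mpr
        exact_mod_cast le_of_lt this
      simp [this]
  -- the algorithm
  set h : List Bool → Bool := fun σ => decide (q < g (σ ++ [true], n)) with hh
  set L : ℕ → List Bool := fun k =>
    Nat.rec (motive := fun _ => List Bool) (pre m) (fun _ ih => ih ++ [h ih]) k with hLdef
  have hL : ∀ k, L k = pre (m + k) := by
    intro k
    induction k with
    | zero => rfl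
    | succ k ih =>
      have : L (k+1) = L k ++ [h (L k)] := rfl
      rw [this, ih, hh]
      have := hkey (m + k) (Nat.le_add_right m k)
      simp only [this]
      rw [Nat.add_succ]
      simp [hpre, List.range_succ]
  have hxeq : x = fun j => (L (j + 1)).getD j false := by
    funext j
    rw [hL (j+1), hpreD (m + (j+1)) j (by omega)]
  -- computability
  have hhc : Computable h := by
    have h1 : Computable fun σ : List Bool => (σ ++ [true], n) :=
      Computable.pair (Computable.list_concat.comp Computable.id (Computable.const true))
        (Computable.const n)
    exact (QltAux.computable_qlt q hq0).comp (hg.comp h1)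
  have hLc : Computable L := by
    have := Computable.nat_rec (f := fun k : ℕ => k) (g := fun _ : ℕ => pre m)
      (h := fun _ (p : ℕ × List Bool) => p.2 ++ [h p.2])
      Computable.id (Computable.const (pre m))
      ((Computable.list_concat.comp (Computable.snd.comp Computable.snd)
        (hhc.comp (Computable.snd.comp Computable.snd))).to₂)
    exact this.of_eq fun k => rfl
  rw [hxeq]
  exact ((Primrec.list_getD false).to_comp.comp (hLc.comp Computable.succ) Computable.id)
end

section
/- Let μ be a Borel probability measure on Cantor space. Then there exists a Borel probability measure ν such that ν([σ]) is a dyadic rational for every string σ, ν([σ]) > 0 whenever μ([σ]) > 0, and for all σ: μ([σ])/2 < ν([σ]) ≤ (μ([σ]) + 2^{-|σ|})/2 · 2, in particular μ([σ]) < 2ν([σ]) for all σ. Moreover, if μ is atomless then ν can be chosen atomless. -/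
open MeasureTheory ENNReal

def IsDyadicR (x : ℝ) : Prop := ∃ m k : ℕ, x = m / 2 ^ k

lemma dyadic_one : IsDyadicR 1 := ⟨1, 0, by norm_num⟩

lemma dyadic_nonneg {x : ℝ} (h : IsDyadicR x) : 0 ≤ x := by
  obtain ⟨m, k, rfl⟩ := h; positivity

lemma dyadic_dense {a b : ℝ} (ha : 0 ≤ a) (hab : a < b) :
    ∃ x : ℝ, IsDyadicR x ∧ a < x ∧ x < b := by
  obtain ⟨k, hk⟩ := exists_pow_lt_of_lt_one (sub_pos.2 hab) (by norm_num : (1:ℝ)/2 < 1)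
  have h2k : (0:ℝ) < 2 ^ k := by positivity
  have hfl : (0:ℤ) ≤ ⌊a * 2 ^ k⌋ := Int.floor_nonneg.2 (by positivity)
  have hcast : ((⌊a * 2 ^ k⌋.toNat : ℕ) : ℝ) = (⌊a * 2 ^ k⌋ : ℝ) := by
    rw [← Int.cast_natCast, Int.toNat_of_nonneg hfl]
  refine ⟨(⌊a * 2 ^ k⌋.toNat + 1 : ℕ) / 2 ^ k, ⟨_, k, rfl⟩, ?_, ?_⟩
  · rw [lt_div_iff₀ h2k]
    push_cast [hcast]
    have := Int.lt_floor_add_one (a * 2 ^ k)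
    linarith
  · rw [div_lt_iff₀ h2k]
    have h1 : (⌊a * 2 ^ k⌋ : ℝ) ≤ a * 2 ^ k := Int.floor_le _
    have h3 : ((1:ℝ)/2) ^ k = 1 / 2 ^ k := by rw [div_pow]; norm_num
    rw [h3] at hk
    have : (1:ℝ) < (b - a) * 2 ^ k := by
      calc (1:ℝ) = (1 / 2 ^ k) * 2 ^ k := by field_simp
      _ < (b - a) * 2 ^ k := by apply mul_lt_mul_of_pos_right hk h2k
    push_cast [hcast]
    nlinarith

lemma dyadic_sub {x y : ℝ} (hx : IsDyadicR x) (hy : IsDyadicR y) (h : y ≤ x) :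
    IsDyadicR (x - y) := by
  obtain ⟨m, k, rfl⟩ := hx
  obtain ⟨m', k', rfl⟩ := hy
  have h2k : (0:ℝ) < 2 ^ k := by positivity
  have h2k' : (0:ℝ) < 2 ^ k' := by positivity
  have hnat : m' * 2 ^ k ≤ m * 2 ^ k' := by
    have : (m' : ℝ) * 2 ^ k ≤ (m : ℝ) * 2 ^ k' := by
      rw [div_le_div_iff₀ h2k' h2k] at h; linarith
    exact_mod_cast this
  refine ⟨m * 2 ^ k' - m' * 2 ^ k, k + k', ?_⟩
  have : ((m * 2 ^ k' - m' * 2 ^ k : ℕ) : ℝ) = (m : ℝ) * 2 ^ k' - m' * 2 ^ k := by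
    push_cast [Nat.cast_sub hnat]; ring
  rw [this]
  field_simp
  ring
lemma cyl_nil : cyl [] = Set.univ := by
  ext x; simp [cyl]

lemma measurableSet_cyl (σ : List Bool) : MeasurableSet (cyl σ) := by
  have : cyl σ = ⋂ i ∈ Finset.range σ.length, (fun x : Cantor => x i) ⁻¹' {σ.getD i false} := by
    ext x; simp [cyl]
  rw [this]
  exact MeasurableSet.biInter (Set.to_countable _)
    (fun i _ => (measurable_pi_apply i) (MeasurableSet.singleton _))

lemma cyl_append (σ : List Bool) (b : Bool) :
    cyl (σ ++ [b]) = cyl σ ∩ {x | x σ.length = b} := by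
  ext x
  simp only [cyl, Set.mem_setOf_eq, Set.mem_inter_iff, List.length_append, List.length_cons,
    List.length_nil]
  constructor
  · intro h
    refine ⟨fun i hi => ?_, ?_⟩
    · have := h i (by omega)
      rwa [List.getD_append _ _ _ _ hi] at this
    · have := h σ.length (by omega)
      rw [List.getD_eq_getElem _ _ (by simp), List.getElem_append_right (le_refl _)] at this
      simpa using this
  · rintro ⟨h1, h2⟩ i hi
    rcases Nat.lt_or_ge i σ.length with h | h
    · rw [List.getD_append _ _ _ _ h]; exact h1 i h
    · have : i = σ.length := by omega
      subst this
      rw [List.getD_eq_getElem _ _ (by simp), List.getElem_append_right (le_refl _)]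
      simpa using h2

lemma cyl_union (σ : List Bool) :
    cyl σ = cyl (σ ++ [false]) ∪ cyl (σ ++ [true]) := by
  rw [cyl_append, cyl_append]
  ext x
  simp only [Set.mem_union, Set.mem_inter_iff, Set.mem_setOf_eq]
  rcases Bool.eq_false_or_eq_true (x σ.length) with h | h <;> tauto

lemma cyl_disj (σ : List Bool) :
    Disjoint (cyl (σ ++ [false])) (cyl (σ ++ [true])) := by
  rw [cyl_append, cyl_append, Set.disjoint_iff]
  rintro x ⟨⟨-, h1⟩, ⟨-, h2⟩⟩
  simp only [Set.mem_setOf_eq] at h1 h2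
  simp [h1] at h2

lemma measure_cyl_add (μ : Measure Cantor) (σ : List Bool) :
    μ (cyl σ) = μ (cyl (σ ++ [false])) + μ (cyl (σ ++ [true])) := by
  rw [cyl_union σ]
  exact measure_union (cyl_disj σ) (measurableSet_cyl _)

section Construction

variable (μ : Measure Cantor)

noncomputable def mr (σ : List Bool) : ℝ := (μ (cyl σ)).toReal

lemma mr_nonneg (σ : List Bool) : 0 ≤ mr μ σ := ENNReal.toReal_nonneg

lemma mr_add [IsFiniteMeasure μ] (σ : List Bool) :
    mr μ σ = mr μ (σ ++ [false]) + mr μ (σ ++ [true]) := by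
  rw [mr, measure_cyl_add μ σ, ENNReal.toReal_add (measure_ne_top _ _) (measure_ne_top _ _)]
  rfl

def DInv (σ : List Bool) (x : ℝ) : Prop :=
  IsDyadicR x ∧ mr μ σ / 2 < x ∧ x < mr μ σ / 2 + ((2:ℝ) ^ σ.length)⁻¹

lemma dinv_nil [IsProbabilityMeasure μ] : DInv μ [] 1 := by
  have h : mr μ [] = 1 := by rw [mr, cyl_nil, measure_univ, ENNReal.toReal_one]
  refine ⟨dyadic_one, ?_, ?_⟩ <;> simp [h] <;> norm_num

lemma exists_split [IsFiniteMeasure μ] (σ : List Bool) (x : ℝ) (h : DInv μ σ x) :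
    ∃ y : ℝ, DInv μ (σ ++ [false]) y ∧ DInv μ (σ ++ [true]) (x - y) := by
  obtain ⟨hd, h1, h2⟩ := h
  set n := σ.length with hn
  set μ0 := mr μ (σ ++ [false]) with hμ0
  set μ1 := mr μ (σ ++ [true]) with hμ1
  set e : ℝ := ((2:ℝ) ^ (n + 1))⁻¹ with he
  have hepos : 0 < e := by positivity
  have hadd : mr μ σ = μ0 + μ1 := mr_add μ σ
  have h2e : ((2:ℝ) ^ n)⁻¹ = 2 * e := by
    rw [he, pow_succ]
    field_simp
  have hμ0n : 0 ≤ μ0 := mr_nonneg μ _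
  have hμ1n : 0 ≤ μ1 := mr_nonneg μ _
  rw [hadd] at h1
  rw [hadd, h2e] at h2
  have hlo : 0 ≤ max (μ0 / 2) (x - μ1 / 2 - e) := le_max_of_le_left (by linarith)
  have hlohi : max (μ0 / 2) (x - μ1 / 2 - e) < min (μ0 / 2 + e) (x - μ1 / 2) := by
    apply max_lt <;> apply lt_min <;> linarith
  obtain ⟨y, hyd, hy1, hy2⟩ := dyadic_dense hlo hlohi
  rw [max_lt_iff] at hy1
  rw [lt_min_iff] at hy2
  have hL : (σ ++ [false]).length = n + 1 := by simp [hn]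
  have hL' : (σ ++ [true]).length = n + 1 := by simp [hn]
  refine ⟨y, ⟨hyd, ?_, ?_⟩, ⟨dyadic_sub hd hyd (by linarith), ?_, ?_⟩⟩
  · exact hy1.1
  · rw [hL, ← hμ0, ← he]; linarith [hy2.1]
  · rw [← hμ1]; linarith [hy2.2]
  · rw [hL', ← hμ1, ← he]; linarith [hy1.2]

open Classical in
noncomputable def pick (σ : List Bool) (x : ℝ) : ℝ :=
  if h : IsFiniteMeasure μ ∧ DInv μ σ x then
    (@exists_split μ h.1 σ x h.2).choose
  else 0

lemma pick_spec [IsFiniteMeasure μ] (σ : List Bool) (x : ℝ) (h : DInv μ σ x) :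
    DInv μ (σ ++ [false]) (pick μ σ x) ∧ DInv μ (σ ++ [true]) (x - pick μ σ x) := by
  rw [pick, dif_pos ⟨‹_›, h⟩]
  exact (@exists_split μ ‹_› σ x h).choose_spec

noncomputable def qrev : List Bool → ℝ
  | [] => 1
  | b :: τ => if b then qrev τ - pick μ τ.reverse (qrev τ) else pick μ τ.reverse (qrev τ)

noncomputable def qq (σ : List Bool) : ℝ := qrev μ σ.reverse

lemma qq_nil : qq μ [] = 1 := rfl

lemma qq_append (σ : List Bool) (b : Bool) :
    qq μ (σ ++ [b]) = if b then qq μ σ - pick μ σ (qq μ σ) else pick μ σ (qq μ σ) := by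
  rw [qq, List.reverse_append]
  simp only [List.reverse_cons, List.reverse_nil, List.nil_append, List.singleton_append]
  rw [qrev]
  simp [qq, List.reverse_reverse]

lemma qq_inv [IsProbabilityMeasure μ] (σ : List Bool) : DInv μ σ (qq μ σ) := by
  have : ∀ τ : List Bool, DInv μ τ.reverse (qrev μ τ) := by
    intro τ
    induction τ with
    | nil => exact dinv_nil μ
    | cons b τ ih =>
      have hs := pick_spec μ τ.reverse (qrev μ τ) ih
      rw [List.reverse_cons, qrev]
      cases b
      · simpa using hs.1
      · simpa using hs.2
  have h := this σ.reverse
  rwa [List.reverse_reverse] at h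

lemma qq_pos [IsProbabilityMeasure μ] (σ : List Bool) : 0 < qq μ σ :=
  lt_of_le_of_lt (by linarith [mr_nonneg μ σ]) (qq_inv μ σ).2.1

lemma qq_add [IsProbabilityMeasure μ] (σ : List Bool) :
    qq μ σ = qq μ (σ ++ [false]) + qq μ (σ ++ [true]) := by
  rw [qq_append, qq_append]; simp

end Construction

section Geometry

variable (μ : Measure Cantor) [IsProbabilityMeasure μ]

noncomputable def arev : List Bool → ℝ
  | [] => 0
  | b :: τ => arev τ + if b then pick μ τ.reverse (qrev μ τ) else 0

noncomputable def aa (σ : List Bool) : ℝ := arev μ σ.reverse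

lemma aa_nil : aa μ [] = 0 := rfl

lemma aa_append (σ : List Bool) (b : Bool) :
    aa μ (σ ++ [b]) = aa μ σ + if b then pick μ σ (qq μ σ) else 0 := by
  rw [aa, List.reverse_append]
  simp only [List.reverse_cons, List.reverse_nil, List.nil_append, List.singleton_append]
  rw [arev]
  simp [aa, qq, List.reverse_reverse]

lemma aa_false (σ : List Bool) : aa μ (σ ++ [false]) = aa μ σ := by
  rw [aa_append]; simp

lemma aa_true (σ : List Bool) :
    aa μ (σ ++ [true]) = aa μ σ + qq μ (σ ++ [false]) := by
  rw [aa_append, qq_append]; simp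

noncomputable def II (σ : List Bool) : Set ℝ := Set.Ico (aa μ σ) (aa μ σ + qq μ σ)

lemma II_nil : II μ [] = Set.Ico (0:ℝ) 1 := by
  rw [II, aa_nil, qq_nil]; norm_num

lemma II_union (σ : List Bool) :
    II μ σ = II μ (σ ++ [false]) ∪ II μ (σ ++ [true]) := by
  rw [II, II, II, aa_false, aa_true]
  have h1 : aa μ σ ≤ aa μ σ + qq μ (σ ++ [false]) := by
    linarith [qq_pos μ (σ ++ [false])]
  have h2 : aa μ σ + qq μ (σ ++ [false]) + qq μ (σ ++ [true]) = aa μ σ + qq μ σ := by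
    rw [qq_add μ σ]; ring
  rw [← h2]
  rw [Set.Ico_union_Ico_eq_Ico h1 (by linarith [qq_pos μ (σ ++ [true])])]

lemma II_subset (σ : List Bool) (b : Bool) : II μ (σ ++ [b]) ⊆ II μ σ := by
  rw [II_union μ σ]
  cases b
  · exact Set.subset_union_left
  · exact Set.subset_union_right

lemma II_subset_unit (σ : List Bool) : II μ σ ⊆ Set.Ico (0:ℝ) 1 := by
  induction σ using List.reverseRecOn with
  | nil => rw [II_nil]
  | append_singleton τ b ih => exact (II_subset μ τ b).trans ih

noncomputable def path (t : ℝ) : ℕ → List Bool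
  | 0 => []
  | n + 1 => path t n ++ [decide (aa μ (path t n ++ [true]) ≤ t)]

lemma path_length (t : ℝ) (n : ℕ) : (path μ t n).length = n := by
  induction n with
  | zero => rfl
  | succ n ih => rw [path]; simp [ih]

lemma mem_II_path {t : ℝ} (ht : t ∈ Set.Ico (0:ℝ) 1) (n : ℕ) :
    t ∈ II μ (path μ t n) := by
  induction n with
  | zero => rw [path, II_nil]; exact ht
  | succ n ih =>
    rw [path]
    set σ := path μ t n
    by_cases h : aa μ (σ ++ [true]) ≤ t
    · simp only [h, decide_eq_true_eq, decide_true]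
      rw [II]
      refine ⟨h, ?_⟩
      have := ih.2
      rw [II] at ih
      have h2 : aa μ (σ ++ [true]) + qq μ (σ ++ [true]) = aa μ σ + qq μ σ := by
        rw [aa_true, qq_add μ σ]; ring
      rw [h2]
      exact ih.2
    · simp only [h, decide_false, decide_eq_true_eq]
      rw [II, aa_false]
      refine ⟨ih.1, ?_⟩
      rw [aa_true] at h
      push_neg at h
      exact h
lemma path_eq {t : ℝ} {σ : List Bool} (h : t ∈ II μ σ) :
    path μ t σ.length = σ := by
  induction σ using List.reverseRecOn with
  | nil => rfl
  | append_singleton τ b ih =>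
    have hτ : path μ t τ.length = τ := ih (II_subset μ τ b h)
    have hlen : (τ ++ [b]).length = τ.length + 1 := by simp
    rw [hlen, path, hτ]
    congr 1
    cases b
    · rw [II, aa_false] at h
      have : t < aa μ (τ ++ [true]) := by
        rw [aa_true]; exact h.2
      simp [not_le.2 this]
    · rw [II] at h
      simp [h.1]

noncomputable def gg (t : ℝ) : Cantor := fun n => (path μ t (n + 1)).getD n false

lemma getD_path (t : ℝ) : ∀ n i, i < n → (path μ t n).getD i false = gg μ t i := by
  intro n
  induction n with
  | zero => omega
  | succ n ih =>
    intro i hi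
    rcases Nat.lt_or_ge i n with h | h
    · rw [path, List.getD_append _ _ _ _ (by rw [path_length]; exact h), ih i h]
    · have : i = n := by omega
      subst this
      rfl

lemma gg_mem_cyl_iff {t : ℝ} (ht : t ∈ Set.Ico (0:ℝ) 1) (σ : List Bool) :
    gg μ t ∈ cyl σ ↔ t ∈ II μ σ := by
  constructor
  · intro h
    have hp : path μ t σ.length = σ := by
      apply List.ext_getElem (by rw [path_length])
      intro i h1 h2
      rw [← List.getD_eq_getElem _ false h1, ← List.getD_eq_getElem _ false h2,
        getD_path μ t σ.length i (by rwa [path_length] at h1)]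
      exact h i h2
    rw [← hp]
    exact mem_II_path μ ht σ.length
  · intro h
    have hp : path μ t σ.length = σ := path_eq μ h
    intro i hi
    rw [← hp, ← getD_path μ t σ.length i hi]

end Geometry

section Meas

variable (μ : Measure Cantor) [IsProbabilityMeasure μ]

lemma meas_path_set (n : ℕ) (σ : List Bool) :
    MeasurableSet {t : ℝ | path μ t n = σ} := by
  induction n generalizing σ with
  | zero =>
    rcases eq_or_ne σ [] with rfl | h
    · have : {t : ℝ | path μ t 0 = ([] : List Bool)} = Set.univ := by
        ext t; simp [path]
      rw [this]; exact MeasurableSet.univ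
    · have : {t : ℝ | path μ t 0 = σ} = ∅ := by
        ext t; simp [path, Ne.symm h, h]
      rw [this]; exact MeasurableSet.empty
  | succ n ih =>
    set c : ℝ := aa μ (σ.dropLast ++ [true]) with hc
    have hset : {t : ℝ | path μ t (n + 1) = σ} =
        {t : ℝ | path μ t n = σ.dropLast} ∩
          {t : ℝ | σ.dropLast ++ [decide (c ≤ t)] = σ} := by
      ext t
      simp only [Set.mem_inter_iff, Set.mem_setOf_eq]
      constructor
      · intro h
        have hd : path μ t n = σ.dropLast := by
          rw [← h, path, List.dropLast_concat]
        refine ⟨hd, ?_⟩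
        conv_rhs => rw [← h, path, hd]
      · rintro ⟨h1, h2⟩
        rw [path, h1, ← hc, h2]
    rw [hset]
    apply MeasurableSet.inter (ih _)
    by_cases h1 : σ.dropLast ++ [true] = σ
    · have : {t : ℝ | σ.dropLast ++ [decide (c ≤ t)] = σ} = Set.Ici c := by
        ext t
        simp only [Set.mem_setOf_eq, Set.mem_Ici]
        constructor
        · intro h
          have h' : σ.dropLast ++ [decide (c ≤ t)] = σ.dropLast ++ [true] :=
            h.trans h1.symm
          have := List.append_cancel_left h'
          simp only [List.cons.injEq] at this
          rcases this with ⟨hb, -⟩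
          exact of_decide_eq_true hb
        · intro h; rw [decide_eq_true h, h1]
      rw [this]; exact measurableSet_Ici
    · by_cases h2 : σ.dropLast ++ [false] = σ
      · have : {t : ℝ | σ.dropLast ++ [decide (c ≤ t)] = σ} = Set.Iio c := by
          ext t
          simp only [Set.mem_setOf_eq, Set.mem_Iio]
          constructor
          · intro h
            rcases Decidable.em (c ≤ t) with hct | hct
            · rw [decide_eq_true hct] at h; exact absurd h h1
            · exact lt_of_not_ge hct
          · intro h
            rw [decide_eq_false (not_le.2 h), h2]
        rw [this]; exact measurableSet_Iio
      · have : {t : ℝ | σ.dropLast ++ [decide (c ≤ t)] = σ} = ∅ := by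
          ext t
          simp only [Set.mem_setOf_eq, Set.mem_empty_iff_false, iff_false]
          intro h
          rcases Bool.eq_false_or_eq_true (decide (c ≤ t)) with hb | hb <;> rw [hb] at h
          · exact h1 h
          · exact h2 h
        rw [this]; exact MeasurableSet.empty

lemma meas_gg : Measurable (gg μ) := by
  apply measurable_pi_lambda
  intro n
  apply measurable_to_countable'
  intro b
  have : (fun t => gg μ t n) ⁻¹' {b} =
      ⋃ (σ : List Bool) (_ : σ.getD n false = b), {t : ℝ | path μ t (n + 1) = σ} := by
    ext t
    simp only [Set.mem_preimage, Set.mem_singleton_iff, Set.mem_iUnion, Set.mem_setOf_eq]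
    constructor
    · intro h
      exact ⟨path μ t (n + 1), h, rfl⟩
    · rintro ⟨σ, hσ, hp⟩
      rw [← hσ, ← hp]
      rfl
  rw [this]
  exact MeasurableSet.iUnion fun σ => MeasurableSet.iUnion fun _ => meas_path_set μ (n + 1) σ

noncomputable def nu : Measure Cantor :=
  Measure.map (gg μ) (volume.restrict (Set.Ico (0:ℝ) 1))

lemma nu_cyl (σ : List Bool) : nu μ (cyl σ) = ENNReal.ofReal (qq μ σ) := by
  rw [nu, Measure.map_apply (meas_gg μ) (measurableSet_cyl σ),
    Measure.restrict_apply (meas_gg μ (measurableSet_cyl σ))]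
  have : gg μ ⁻¹' cyl σ ∩ Set.Ico (0:ℝ) 1 = II μ σ := by
    ext t
    simp only [Set.mem_inter_iff, Set.mem_preimage]
    constructor
    · rintro ⟨h1, h2⟩
      exact (gg_mem_cyl_iff μ h2 σ).1 h1
    · intro h
      have ht : t ∈ Set.Ico (0:ℝ) 1 := II_subset_unit μ σ h
      exact ⟨(gg_mem_cyl_iff μ ht σ).2 h, ht⟩
  rw [this, II, Real.volume_Ico]
  congr 1
  ring

end Meas

section Final

variable (μ : Measure Cantor) [IsProbabilityMeasure μ]

lemma ofReal_dyadic (m k : ℕ) :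
    ENNReal.ofReal ((m : ℝ) / 2 ^ k) = (m : ℝ≥0∞) / 2 ^ k := by
  rw [ENNReal.ofReal_div_of_pos (by positivity)]
  congr 1
  · exact ENNReal.ofReal_natCast m
  · rw [ENNReal.ofReal_pow (by norm_num : (0:ℝ) ≤ 2)]
    norm_num

lemma mu_eq_ofReal (σ : List Bool) : μ (cyl σ) = ENNReal.ofReal (mr μ σ) :=
  (ENNReal.ofReal_toReal (measure_ne_top μ _)).symm

lemma half_ofReal (x : ℝ) : ENNReal.ofReal x / 2 = ENNReal.ofReal (x / 2) := by
  rw [ENNReal.ofReal_div_of_pos (by norm_num : (0:ℝ) < 2)]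
  norm_num

lemma inv_pow_ofReal (n : ℕ) :
    ((2:ℝ≥0∞) ^ n)⁻¹ = ENNReal.ofReal (((2:ℝ) ^ n)⁻¹) := by
  rw [ENNReal.ofReal_inv_of_pos (by positivity), ENNReal.ofReal_pow (by norm_num : (0:ℝ) ≤ 2)]
  norm_num

lemma nu_lower (σ : List Bool) : μ (cyl σ) / 2 < nu μ (cyl σ) := by
  rw [nu_cyl, mu_eq_ofReal μ σ, half_ofReal]
  exact (ENNReal.ofReal_lt_ofReal_iff (qq_pos μ σ)).2 (qq_inv μ σ).2.1

lemma nu_upper (σ : List Bool) :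
    nu μ (cyl σ) ≤ μ (cyl σ) + ((2:ℝ≥0∞) ^ σ.length)⁻¹ := by
  rw [nu_cyl, mu_eq_ofReal μ σ, inv_pow_ofReal,
    ← ENNReal.ofReal_add (mr_nonneg μ σ) (by positivity)]
  exact ENNReal.ofReal_le_ofReal (by linarith [(qq_inv μ σ).2.2, mr_nonneg μ σ])

theorem stmt_10' :
    ∃ ν : Measure Cantor, IsProbabilityMeasure ν ∧
      (∀ σ : List Bool, ∃ m n : ℕ, ν (cyl σ) = (m : ℝ≥0∞) / 2 ^ n) ∧
      (∀ σ : List Bool, 0 < μ (cyl σ) → 0 < ν (cyl σ)) ∧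
      (∀ σ : List Bool,
        μ (cyl σ) / 2 < ν (cyl σ) ∧
        ν (cyl σ) ≤ (μ (cyl σ) + ((2:ℝ≥0∞) ^ σ.length)⁻¹) / 2 * 2) ∧
      (∀ σ : List Bool, μ (cyl σ) < 2 * ν (cyl σ)) ∧
      ((∀ y : Cantor, μ {y} = 0) → ∀ y : Cantor, ν {y} = 0) := by
  refine ⟨nu μ, ?_, ?_, ?_, ?_, ?_, ?_⟩
  · constructor
    rw [← cyl_nil, nu_cyl, qq_nil, ENNReal.ofReal_one]
  · intro σ
    obtain ⟨m, k, hmk⟩ := (qq_inv μ σ).1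
    exact ⟨m, k, by rw [nu_cyl, hmk, ofReal_dyadic]⟩
  · intro σ _
    rw [nu_cyl]
    exact ENNReal.ofReal_pos.2 (qq_pos μ σ)
  · intro σ
    refine ⟨nu_lower μ σ, ?_⟩
    rw [ENNReal.div_mul_cancel (by norm_num) (by norm_num)]
    exact nu_upper μ σ
  · intro σ
    have h := nu_lower μ σ
    rw [ENNReal.div_lt_iff (Or.inl (by norm_num)) (Or.inl (by norm_num))] at h
    rwa [mul_comm] at h
  · intro hμ y
    set s : ℕ → List Bool := fun n => List.ofFn (fun i : Fin n => y i) with hs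
    have hlen : ∀ n, (s n).length = n := fun n => by simp [hs]
    have hcyl : ∀ n, cyl (s n) = {x : Cantor | ∀ i < n, x i = y i} := by
      intro n
      ext x
      simp only [cyl, Set.mem_setOf_eq, hlen]
      constructor
      · intro h i hi
        have := h i hi
        rwa [List.getD_eq_getElem _ _ (by simp [hs, hi]), List.getElem_ofFn] at this
      · intro h i hi
        rw [List.getD_eq_getElem _ _ (by simp [hs, hi]), List.getElem_ofFn]
        exact h i hi
    have hsub : ∀ n, ({y} : Set Cantor) ⊆ cyl (s n) := by
      intro n z hz
      rw [Set.mem_singleton_iff] at hz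
      subst hz
      rw [hcyl]
      exact fun i _ => rfl
    have hanti : Antitone fun n => cyl (s n) := by
      intro m n hmn
      show cyl (s n) ⊆ cyl (s m)
      rw [hcyl, hcyl]
      intro x hx i hi
      exact hx i (lt_of_lt_of_le hi hmn)
    have hiInt : ⋂ n, cyl (s n) = {y} := by
      ext x
      simp only [Set.mem_iInter, hcyl, Set.mem_setOf_eq, Set.mem_singleton_iff]
      constructor
      · intro h
        funext i
        exact h (i + 1) i (Nat.lt_succ_self i)
      · rintro rfl
        exact fun n i _ => rfl
    have h0 : Filter.Tendsto (fun n => μ (cyl (s n))) Filter.atTop (nhds 0) := by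
      have := tendsto_measure_iInter_atTop (μ := μ)
        (fun n => (measurableSet_cyl (s n)).nullMeasurableSet) hanti
        ⟨0, measure_ne_top μ _⟩
      rwa [hiInt, hμ y] at this
    have h2 : Filter.Tendsto (fun n : ℕ => ((2:ℝ≥0∞) ^ n)⁻¹) Filter.atTop (nhds 0) := by
      simp only [ENNReal.inv_pow]
      exact ENNReal.tendsto_pow_atTop_nhds_zero_of_lt_one (by norm_num)
    have h1 : Filter.Tendsto (fun n => μ (cyl (s n)) + ((2:ℝ≥0∞) ^ n)⁻¹)
        Filter.atTop (nhds 0) := by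
      simpa using h0.add h2
    have hb : ∀ n, nu μ {y} ≤ μ (cyl (s n)) + ((2:ℝ≥0∞) ^ n)⁻¹ := by
      intro n
      refine (measure_mono (hsub n)).trans ?_
      have := nu_upper μ (s n)
      rwa [hlen n] at this
    have : nu μ {y} ≤ 0 := ge_of_tendsto' h1 hb
    exact le_antisymm this (zero_le)

end Final

theorem stmt_10 (μ : Measure Cantor) [IsProbabilityMeasure μ] :
    ∃ ν : Measure Cantor, IsProbabilityMeasure ν ∧
      (∀ σ : List Bool, ∃ m n : ℕ, ν (cyl σ) = (m : ℝ≥0∞) / 2 ^ n) ∧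
      (∀ σ : List Bool, 0 < μ (cyl σ) → 0 < ν (cyl σ)) ∧
      (∀ σ : List Bool,
        μ (cyl σ) / 2 < ν (cyl σ) ∧
        ν (cyl σ) ≤ (μ (cyl σ) + ((2:ℝ≥0∞) ^ σ.length)⁻¹) / 2 * 2) ∧
      (∀ σ : List Bool, μ (cyl σ) < 2 * ν (cyl σ)) ∧
      ((∀ y : Cantor, μ {y} = 0) → ∀ y : Cantor, ν {y} = 0) := by
  exact stmt_10' μ
end
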